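/- For the annulus Ω_r = {r < |z| < 1}, the Bergman metric at √r satisfies lim_{r→0⁺} F_B^{Ω_r}(√r,1)²/log(1/r) = 4. -/

import Mathlib

open Real Filter Topology

/-- `β₀(r,t) = B_r(t,t)`: diagonal Bergman kernel of the annulus `{r < |z| < 1}` at a point
of modulus `t`:
`B_r(z,z) = (1/π)[Σ_{n≠-1} (n+1)|z|^{2n}/(1-r^{2n+2}) + |z|⁻²/(2 log(1/r))]`. -/
noncomputable def beta0 (r t : ℝ) : ℝ :=
  (1/π) * ∑' n : ℤ, if n = -1 then t ^ (-2 : ℤ) / (2 * Real.log (1/r))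
    else ((n : ℝ) + 1) * t ^ (2*n) / (1 - r ^ (2*n+2))

/-- `β₁(r,t) = ∂_z B_r(z,z)` at `z = t > 0`. -/
noncomputable def beta1 (r t : ℝ) : ℝ :=
  (1/π) * ∑' n : ℤ, if n = -1 then -(t ^ (-3 : ℤ)) / (2 * Real.log (1/r))
    else ((n : ℝ) + 1) * (n : ℝ) * t ^ (2*n-1) / (1 - r ^ (2*n+2))

/-- `β₂(r,t) = ∂_z∂_z̄ B_r(z,z)` at `z = t > 0`. -/
noncomputable def beta2 (r t : ℝ) : ℝ :=
  (1/π) * ∑' n : ℤ, if n = -1 then t ^ (-4 : ℤ) / (2 * Real.log (1/r))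
    else ((n : ℝ) + 1) * (n : ℝ)^2 * t ^ (2*n-2) / (1 - r ^ (2*n+2))

/-- The squared Bergman metric of the annulus at the point `t` in the unit direction:
`F_B(t,1)² = (β₀β₂ - β₁²)/β₀²`. -/
noncomputable def bergmanMetricSq (r t : ℝ) : ℝ :=
  (beta0 r t * beta2 r t - (beta1 r t)^2) / (beta0 r t)^2

set_option maxHeartbeats 1000000

noncomputable def Qc (c : ℕ → ℝ) (r : ℝ) : ℝ := ∑' n : ℕ, c n * r ^ n / (1 - r ^ (2*n+2))

lemma geom_cube (a : ℝ) {x : ℝ} (hx : |x| < 1) :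
    Summable fun n : ℕ => ((n:ℝ)+a)^3 * x^n := by
  have base : ∀ k : ℕ, Summable (fun n : ℕ => (n:ℝ)^k * x^n) := fun k =>
    summable_pow_mul_geometric_of_norm_lt_one k (by rwa [Real.norm_eq_abs])
  refine (((base 3).add (((base 2).mul_left (3*a)).add
    (((base 1).mul_left (3*a^2)).add ((base 0).mul_left (a^3))))).congr ?_)
  intro n; ring

lemma den_pos {r : ℝ} (hr0 : 0 ≤ r) (hr1 : r < 1) (n : ℕ) : 0 < 1 - r^(2*n+2) := by
  have := pow_lt_one₀ hr0 hr1 (n := 2*n+2) (by omega)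
  linarith

lemma den_le {r : ℝ} (hr0 : 0 ≤ r) (hr1 : r < 1) (n : ℕ) :
    1 - r^2 ≤ 1 - r^(2*n+2) := by
  have := pow_le_pow_of_le_one hr0 hr1.le (show 2 ≤ 2*n+2 by omega)
  linarith

lemma summable_Qc {c : ℕ → ℝ} {r : ℝ} (hr0 : 0 < r) (hr1 : r < 1)
    (hc0 : ∀ n, 0 ≤ c n) (hc : ∀ n, c n ≤ 8*((n:ℝ)+1)^3) :
    Summable fun n : ℕ => c n * r ^ n / (1 - r ^ (2*n+2)) := by
  have habs : |r| < 1 := by rwa [abs_of_pos hr0]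
  have h2 : (0:ℝ) < 1 - r^2 := by
    have := pow_lt_one₀ hr0.le hr1 (two_ne_zero); linarith
  refine Summable.of_nonneg_of_le (fun n => ?_) (fun n => ?_)
    (((geom_cube 1 habs).mul_left 8).div_const (1-r^2))
  · exact div_nonneg (mul_nonneg (hc0 n) (pow_nonneg hr0.le n)) (den_pos hr0.le hr1 n).le
  · have hle : c n * r^n ≤ 8*((n:ℝ)+1)^3 * r^n :=
      mul_le_mul_of_nonneg_right (hc n) (pow_nonneg hr0.le n)
    calc c n * r^n / (1 - r^(2*n+2)) ≤ 8*((n:ℝ)+1)^3 * r^n / (1 - r^2) := by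
          apply div_le_div₀ (by positivity) hle h2 (den_le hr0.le hr1 n)
      _ = 8*(((n:ℝ)+1)^3 * r^n) / (1-r^2) := by ring

lemma Qc_nonneg {c : ℕ → ℝ} {r : ℝ} (hr0 : 0 < r) (hr1 : r < 1)
    (hc0 : ∀ n, 0 ≤ c n) : 0 ≤ Qc c r :=
  tsum_nonneg fun n =>
    div_nonneg (mul_nonneg (hc0 n) (pow_nonneg hr0.le n)) (den_pos hr0.le hr1 n).le

lemma Qc_tendsto {c : ℕ → ℝ} (hc0 : ∀ n, 0 ≤ c n) (hc : ∀ n, c n ≤ 8*((n:ℝ)+1)^3)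
    (h00 : c 0 = 1) : Tendsto (Qc c) (𝓝[>] (0:ℝ)) (𝓝 1) := by
  set K : ℝ := ∑' n : ℕ, 8*((n:ℝ)+2)^3 * (1/2:ℝ)^n with hKdef
  have hKs : Summable (fun n : ℕ => 8*((n:ℝ)+2)^3 * (1/2:ℝ)^n) :=
    ((geom_cube 2 (by rw [abs_of_pos (by norm_num : (0:ℝ) < 1/2)]; norm_num)).mul_left 8).congr (fun n => by ring)
  have hmem : Set.Ioo (0:ℝ) (1/2) ∈ 𝓝[>] (0:ℝ) :=
    Ioo_mem_nhdsGT_of_mem ⟨le_refl _, by norm_num⟩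
  have hupper : Tendsto (fun r : ℝ => (1 + K*r)/(1-r^2)) (𝓝[>] (0:ℝ)) (𝓝 1) := by
    have h1 : Tendsto (fun r : ℝ => (1 + K*r)/(1-r^2)) (𝓝 (0:ℝ)) (𝓝 ((1+K*0)/(1-0^2))) := by
      apply Tendsto.div
      · exact (tendsto_const_nhds.add (tendsto_const_nhds.mul tendsto_id))
      · exact (tendsto_const_nhds.sub ((tendsto_id).pow 2))
      · norm_num
    have : ((1+K*0)/(1-0^2) : ℝ) = 1 := by norm_num
    rw [this] at h1
    exact h1.mono_left nhdsWithin_le_nhds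
  refine tendsto_of_tendsto_of_tendsto_of_le_of_le' tendsto_const_nhds hupper ?_ ?_
  · -- 1 ≤ Qc c r
    filter_upwards [hmem] with r hr
    have hr0 : 0 < r := hr.1
    have hr1 : r < 1 := hr.2.trans (by norm_num)
    have hs := summable_Qc hr0 hr1 hc0 hc
    have h0le : (1:ℝ) ≤ c 0 * r^0 / (1 - r^(2*0+2)) := by
      rw [h00]; simp only [pow_zero, one_mul, Nat.mul_zero, Nat.zero_add]
      rw [le_div_iff₀ (den_pos hr0.le hr1 0)]
      have : 0 ≤ r^(2*0+2) := by positivity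
      simp only [Nat.mul_zero, Nat.zero_add] at this ⊢
      nlinarith
    refine h0le.trans (hs.le_tsum 0 (fun j _ => ?_))
    exact div_nonneg (mul_nonneg (hc0 j) (pow_nonneg hr0.le j)) (den_pos hr0.le hr1 j).le
  · -- Qc c r ≤ (1+K*r)/(1-r^2)
    filter_upwards [hmem] with r hr
    have hr0 : 0 < r := hr.1
    have hrh : r ≤ 1/2 := hr.2.le
    have hr1 : r < 1 := hr.2.trans (by norm_num)
    have h2 : (0:ℝ) < 1 - r^2 := by
      have := pow_lt_one₀ hr0.le hr1 (two_ne_zero); linarith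
    have hs := summable_Qc hr0 hr1 hc0 hc
    have hsum : Summable (fun n : ℕ => c n * r^n) := by
      refine Summable.of_nonneg_of_le
        (fun n => mul_nonneg (hc0 n) (pow_nonneg hr0.le n))
        (fun n => mul_le_mul_of_nonneg_right (hc n) (pow_nonneg hr0.le n))
        (((geom_cube 1 (by rwa [abs_of_pos hr0])).mul_left 8).congr (fun n => by ring))
    have step1 : Qc c r ≤ (∑' n : ℕ, c n * r^n) / (1-r^2) := by
      rw [Qc, div_eq_mul_inv, ← tsum_mul_right]
      refine Summable.tsum_le_tsum (fun n => ?_) hs (hsum.mul_right _)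
      rw [div_eq_mul_inv]
      refine mul_le_mul_of_nonneg_left ?_ (mul_nonneg (hc0 n) (pow_nonneg hr0.le n))
      exact inv_anti₀ h2 (den_le hr0.le hr1 n)
    have step2 : (∑' n : ℕ, c n * r^n) ≤ 1 + K * r := by
      rw [hsum.tsum_eq_zero_add, h00, pow_zero, mul_one]
      refine add_le_add_right ?_ 1
      have hshift : Summable (fun n : ℕ => c (n+1) * r^(n+1)) :=
        (summable_nat_add_iff 1).2 hsum
      calc (∑' n : ℕ, c (n+1) * r^(n+1))
          ≤ ∑' n : ℕ, (8*((n:ℝ)+2)^3 * (1/2:ℝ)^n) * r := by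
            refine Summable.tsum_le_tsum (fun n => ?_) hshift (hKs.mul_right r)
            have hc' : c (n+1) ≤ 8*((n:ℝ)+2)^3 := by
              have := hc (n+1); push_cast at this ⊢; linarith
            have hpow : r^(n+1) ≤ (1/2:ℝ)^n * r := by
              rw [pow_succ]
              exact mul_le_mul_of_nonneg_right
                (pow_le_pow_left₀ hr0.le hrh n) hr0.le
            calc c (n+1) * r^(n+1) ≤ 8*((n:ℝ)+2)^3 * ((1/2:ℝ)^n * r) := by
                  apply mul_le_mul hc' hpow (by positivity)
                  positivity
              _ = (8*((n:ℝ)+2)^3 * (1/2:ℝ)^n) * r := by ring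
        _ = K * r := tsum_mul_right
    calc Qc c r ≤ (∑' n : ℕ, c n * r^n) / (1-r^2) := step1
      _ ≤ (1 + K*r)/(1-r^2) := (div_le_div_iff_of_pos_right h2).mpr step2

/-- pairing identity: term at `-(n+2)` matches term at `n` up to sign -/
lemma pair_core {r : ℝ} (hr0 : 0 < r) (hr1 : r < 1) (n : ℕ) :
    r ^ (-((n:ℤ)+2)) / (1 - r ^ (2*(-((n:ℤ)+2))+2)) = -(r^n / (1 - r^(2*n+2))) := by
  have hx : r ≠ 0 := hr0.ne'
  have hD : (1:ℝ) - r^(2*n+2) ≠ 0 := (den_pos hr0.le hr1 n).ne'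
  rw [show -((n:ℤ)+2) = -((n+2:ℕ):ℤ) by push_cast; ring]
  rw [show 2*(-(((n+2:ℕ):ℤ)))+2 = -((2*n+2:ℕ):ℤ) by push_cast; ring]
  rw [zpow_neg, zpow_natCast, zpow_neg, zpow_natCast]
  have hp : r^(2*n+2) ≠ 0 := pow_ne_zero _ hx
  have hq : r^(n+2) ≠ 0 := pow_ne_zero _ hx
  have hlt : r^(2*n+2) < 1 := pow_lt_one₀ hr0.le hr1 (by omega)
  have hinv : 1 < (r^(2*n+2))⁻¹ := (one_lt_inv₀ (by positivity)).mpr hlt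
  have h1 : (1:ℝ) - (r^(2*n+2))⁻¹ ≠ 0 := (show (1:ℝ) - (r^(2*n+2))⁻¹ < 0 by linarith).ne
  have e1 : (1:ℝ) - (r^(2*n+2))⁻¹ = -((1 - r^(2*n+2)) / r^(2*n+2)) := by field_simp; ring
  have e2 : ((r^(n+2):ℝ))⁻¹ * r^(2*n+2) = r^n := by
    rw [inv_mul_eq_div, div_eq_mul_inv, ← pow_sub₀ r hx (by omega : n+2 ≤ 2*n+2)]
    congr 1; omega
  rw [e1, div_neg, div_div_eq_mul_div, e2]

lemma sqrt_zpow {r : ℝ} (hr0 : 0 < r) (k : ℤ) : (Real.sqrt r) ^ (2*k) = r ^ k := by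
  have h2 : (Real.sqrt r) ^ (2:ℤ) = r := by
    rw [show (2:ℤ) = ((2:ℕ):ℤ) from rfl, zpow_natCast, Real.sq_sqrt hr0.le]
  rw [zpow_mul, h2]

lemma tsum_int_split {F : ℤ → ℝ} {a b : ℕ → ℝ} {s A B : ℝ}
    (hA : HasSum a A) (hB : HasSum b B)
    (hpos : ∀ n : ℕ, F n = a n) (hm1 : F (-1) = s)
    (hneg : ∀ n : ℕ, F (-((n:ℤ)+2)) = b n) :
    ∑' n : ℤ, F n = A + (B + s) := by
  have h1 : HasSum (fun n : ℕ => F n) A := by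
    rw [show (fun n : ℕ => F n) = a from funext hpos]; exact hA
  have h2 : HasSum (fun n : ℕ => F (-((n:ℤ)+1))) (B + s) := by
    have e : (fun n : ℕ => F (-((((n+1:ℕ)):ℤ)+1))) = b := funext fun n => by
      rw [show -((((n+1:ℕ)):ℤ)+1) = -((n:ℤ)+2) by push_cast; ring]
      exact hneg n
    have key : HasSum (fun n : ℕ => F (-((((n+1:ℕ)):ℤ)+1))) B := by rw [e]; exact hB
    have h3 := (hasSum_nat_add_iff (f := fun m : ℕ => F (-((m:ℤ)+1))) 1).mp key
    rw [Finset.sum_range_one, show -(((0:ℕ):ℤ)+1) = (-1 : ℤ) by norm_num, hm1] at h3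
    exact h3
  exact (h1.of_nat_of_neg_add_one h2).tsum_eq

section betaeval

variable {r : ℝ}

lemma bound1 (n : ℕ) : ((n:ℝ)+1) ≤ 8*((n:ℝ)+1)^3 := by
  have h : (0:ℝ) ≤ (n:ℝ) := Nat.cast_nonneg n
  nlinarith [sq_nonneg ((n:ℝ)+1)]

lemma bound1' (n : ℕ) : ((n:ℝ)+1)*(n:ℝ) ≤ 8*((n:ℝ)+1)^3 := by
  have h : (0:ℝ) ≤ (n:ℝ) := Nat.cast_nonneg n
  nlinarith [sq_nonneg ((n:ℝ)+1), sq_nonneg (n:ℝ)]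

lemma bound1'' (n : ℕ) : ((n:ℝ)+1)*((n:ℝ)+2) ≤ 8*((n:ℝ)+1)^3 := by
  have h : (0:ℝ) ≤ (n:ℝ) := Nat.cast_nonneg n
  nlinarith [sq_nonneg ((n:ℝ)+1), sq_nonneg (n:ℝ)]

lemma bound2 (n : ℕ) : ((n:ℝ)+1)*(n:ℝ)^2 ≤ 8*((n:ℝ)+1)^3 := by
  have h : (0:ℝ) ≤ (n:ℝ) := Nat.cast_nonneg n
  nlinarith [sq_nonneg ((n:ℝ)+1), sq_nonneg (n:ℝ)]

lemma bound2'' (n : ℕ) : ((n:ℝ)+1)*((n:ℝ)+2)^2 ≤ 8*((n:ℝ)+1)^3 := by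
  have h : (0:ℝ) ≤ (n:ℝ) := Nat.cast_nonneg n
  nlinarith [sq_nonneg ((n:ℝ)+1), sq_nonneg (n:ℝ)]

lemma bound3 (n : ℕ) : ((n:ℝ)+1)^3 ≤ 8*((n:ℝ)+1)^3 := by
  have h : (0:ℝ) ≤ ((n:ℝ)+1)^3 := by positivity
  linarith

lemma beta0_eq (hr0 : 0 < r) (hr1 : r < 1) :
    beta0 r (Real.sqrt r) =
      (1/π) * (2 * Qc (fun n => (n:ℝ)+1) r + r⁻¹ / (2*Real.log (1/r))) := by
  have hsa : Summable (fun n : ℕ => (((n:ℝ)+1) * r^n / (1-r^(2*n+2)))) :=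
    summable_Qc hr0 hr1 (fun n => by positivity) bound1
  have hsplit := tsum_int_split (F := fun n : ℤ =>
      if n = -1 then (Real.sqrt r) ^ (-2 : ℤ) / (2 * Real.log (1/r))
      else ((n : ℝ) + 1) * (Real.sqrt r) ^ (2*n) / (1 - r ^ (2*n+2)))
    (s := r⁻¹ / (2*Real.log (1/r))) hsa.hasSum hsa.hasSum ?_ ?_ ?_
  · rw [beta0, hsplit, Qc]; ring
  · intro n
    have hne : ((n:ℕ):ℤ) ≠ -1 := by omega
    simp only [if_neg hne]
    rw [sqrt_zpow hr0, zpow_natCast,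
      show (2*((n:ℕ):ℤ)+2) = ((2*n+2:ℕ):ℤ) by push_cast; ring, zpow_natCast]
    push_cast
    ring
  · simp only [if_pos (rfl : (-1:ℤ) = -1), if_true]
    rw [show (-2:ℤ) = 2*(-1) by norm_num, sqrt_zpow hr0, zpow_neg_one]
  · intro n
    have hne : -((n:ℤ)+2) ≠ -1 := by omega
    simp only [if_neg hne]
    rw [sqrt_zpow hr0, mul_div_assoc, pair_core hr0 hr1 n]
    push_cast
    ring

lemma beta1_tsum (hr0 : 0 < r) (hr1 : r < 1) :
    beta1 r (Real.sqrt r) =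
      (1/π) * ((Qc (fun n => ((n:ℝ)+1)*(n:ℝ)) r) * (Real.sqrt r)⁻¹ +
        (-(Qc (fun n => ((n:ℝ)+1)*((n:ℝ)+2)) r * (Real.sqrt r)⁻¹) +
          -(r⁻¹*(Real.sqrt r)⁻¹)/(2*Real.log (1/r)))) := by
  have hs0 : Real.sqrt r ≠ 0 := (Real.sqrt_pos.mpr hr0).ne'
  have hsa : Summable (fun n : ℕ => (((n:ℝ)+1)*(n:ℝ) * r^n / (1-r^(2*n+2)))) :=
    summable_Qc hr0 hr1 (fun n => by positivity) bound1'
  have hsb : Summable (fun n : ℕ => (((n:ℝ)+1)*((n:ℝ)+2) * r^n / (1-r^(2*n+2)))) :=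
    summable_Qc hr0 hr1 (fun n => by positivity) bound1''
  have hsplit := tsum_int_split (F := fun n : ℤ =>
      if n = -1 then -((Real.sqrt r) ^ (-3 : ℤ)) / (2 * Real.log (1/r))
      else ((n : ℝ) + 1) * (n : ℝ) * (Real.sqrt r) ^ (2*n-1) / (1 - r ^ (2*n+2)))
    (s := -(r⁻¹*(Real.sqrt r)⁻¹)/(2*Real.log (1/r))) (hsa.hasSum.mul_right (Real.sqrt r)⁻¹)
    ((hsb.hasSum.mul_right (Real.sqrt r)⁻¹).neg) ?_ ?_ ?_
  · rw [beta1, hsplit, Qc, Qc]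
  · intro n
    have hne : ((n:ℕ):ℤ) ≠ -1 := by omega
    simp only [if_neg hne]
    rw [zpow_sub₀ hs0, sqrt_zpow hr0, zpow_one, zpow_natCast,
      show (2*((n:ℕ):ℤ)+2) = ((2*n+2:ℕ):ℤ) by push_cast; ring, zpow_natCast]
    push_cast
    ring
  · simp only [if_pos (rfl : (-1:ℤ) = -1), if_true]
    rw [show (-3:ℤ) = 2*(-1)-1 by norm_num, zpow_sub₀ hs0, sqrt_zpow hr0,
      zpow_one, zpow_neg_one]
    ring
  · intro n
    have hne : -((n:ℤ)+2) ≠ -1 := by omega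
    simp only [if_neg hne]
    rw [zpow_sub₀ hs0, sqrt_zpow hr0, zpow_one]
    rw [show ((-((n:ℤ)+2):ℤ):ℝ) + 1 = -(((n:ℝ))+1) by push_cast; ring]
    rw [show (((-((n:ℤ)+2):ℤ)):ℝ) = -((n:ℝ)+2) by push_cast; ring]
    rw [show -(((n:ℝ))+1) * -((n:ℝ)+2) * (r ^ (-((n:ℤ)+2)) / Real.sqrt r) /
          (1 - r ^ (2*(-((n:ℤ)+2))+2)) =
        (((n:ℝ))+1) * ((n:ℝ)+2) *
          (r ^ (-((n:ℤ)+2)) / (1 - r ^ (2*(-((n:ℤ)+2))+2))) * (Real.sqrt r)⁻¹ by ring]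
    rw [pair_core hr0 hr1 n]
    ring

lemma beta2_tsum (hr0 : 0 < r) (hr1 : r < 1) :
    beta2 r (Real.sqrt r) =
      (1/π) * ((Qc (fun n => ((n:ℝ)+1)*(n:ℝ)^2) r) * r⁻¹ +
        ((Qc (fun n => ((n:ℝ)+1)*((n:ℝ)+2)^2) r * r⁻¹) +
          (r^2)⁻¹/(2*Real.log (1/r)))) := by
  have hx : r ≠ 0 := hr0.ne'
  have hsa : Summable (fun n : ℕ => (((n:ℝ)+1)*(n:ℝ)^2 * r^n / (1-r^(2*n+2)))) :=
    summable_Qc hr0 hr1 (fun n => by positivity) bound2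
  have hsb : Summable (fun n : ℕ => (((n:ℝ)+1)*((n:ℝ)+2)^2 * r^n / (1-r^(2*n+2)))) :=
    summable_Qc hr0 hr1 (fun n => by positivity) bound2''
  have hsplit := tsum_int_split (F := fun n : ℤ =>
      if n = -1 then (Real.sqrt r) ^ (-4 : ℤ) / (2 * Real.log (1/r))
      else ((n : ℝ) + 1) * (n : ℝ)^2 * (Real.sqrt r) ^ (2*n-2) / (1 - r ^ (2*n+2)))
    (s := (r^2)⁻¹/(2*Real.log (1/r))) (hsa.hasSum.mul_right r⁻¹) (hsb.hasSum.mul_right r⁻¹) ?_ ?_ ?_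
  · rw [beta2, hsplit, Qc, Qc]
  · intro n
    have hne : ((n:ℕ):ℤ) ≠ -1 := by omega
    simp only [if_neg hne]
    rw [show (2*((n:ℕ):ℤ)-2) = 2*(((n:ℕ):ℤ)-1) by ring, sqrt_zpow hr0,
      zpow_sub₀ hx, zpow_one, zpow_natCast,
      show (2*((n:ℕ):ℤ)+2) = ((2*n+2:ℕ):ℤ) by push_cast; ring, zpow_natCast]
    push_cast
    ring
  · simp only [if_pos (rfl : (-1:ℤ) = -1), if_true]
    rw [show (-4:ℤ) = 2*(-2) by norm_num, sqrt_zpow hr0,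
      show (-2:ℤ) = -((2:ℕ):ℤ) by norm_num, zpow_neg, zpow_natCast]
  · intro n
    have hne : -((n:ℤ)+2) ≠ -1 := by omega
    simp only [if_neg hne]
    rw [show (2*(-((n:ℤ)+2))-2) = 2*((-((n:ℤ)+2))-1) by ring, sqrt_zpow hr0,
      zpow_sub₀ hx, zpow_one]
    rw [show ((-((n:ℤ)+2):ℤ):ℝ) + 1 = -(((n:ℝ))+1) by push_cast; ring]
    rw [show (((-((n:ℤ)+2):ℤ)):ℝ) = -((n:ℝ)+2) by push_cast; ring]
    rw [show -(((n:ℝ))+1) * (-((n:ℝ)+2))^2 * (r ^ (-((n:ℤ)+2)) / r) /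
          (1 - r ^ (2*(-((n:ℤ)+2))+2)) =
        -((((n:ℝ))+1) * ((n:ℝ)+2)^2 *
          (r ^ (-((n:ℤ)+2)) / (1 - r ^ (2*(-((n:ℤ)+2))+2))) * r⁻¹) by ring]
    rw [pair_core hr0 hr1 n]
    ring

end betaeval

section assemble

variable {r : ℝ}

lemma Qc_diff (hr0 : 0 < r) (hr1 : r < 1) :
    Qc (fun n => ((n:ℝ)+1)*(n:ℝ)) r - Qc (fun n => ((n:ℝ)+1)*((n:ℝ)+2)) r
      = -2 * Qc (fun n => (n:ℝ)+1) r := by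
  have hsa : Summable (fun n : ℕ => (((n:ℝ)+1)*(n:ℝ) * r^n / (1-r^(2*n+2)))) :=
    summable_Qc hr0 hr1 (fun n => by positivity) bound1'
  have hsb : Summable (fun n : ℕ => (((n:ℝ)+1)*((n:ℝ)+2) * r^n / (1-r^(2*n+2)))) :=
    summable_Qc hr0 hr1 (fun n => by positivity) bound1''
  rw [Qc, Qc, Qc, ← hsa.tsum_sub hsb, ← tsum_mul_left]
  refine tsum_congr fun n => ?_
  have hD : (1:ℝ) - r^(2*n+2) ≠ 0 := (den_pos hr0.le hr1 n).ne'
  field_simp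
  ring

lemma Qc_comb (hr0 : 0 < r) (hr1 : r < 1) :
    Qc (fun n => ((n:ℝ)+1)*(n:ℝ)^2) r + Qc (fun n => ((n:ℝ)+1)*((n:ℝ)+2)^2) r
      = 2 * Qc (fun n => ((n:ℝ)+1)^3) r + 2 * Qc (fun n => (n:ℝ)+1) r := by
  have hsa : Summable (fun n : ℕ => (((n:ℝ)+1)*(n:ℝ)^2 * r^n / (1-r^(2*n+2)))) :=
    summable_Qc hr0 hr1 (fun n => by positivity) bound2
  have hsb : Summable (fun n : ℕ => (((n:ℝ)+1)*((n:ℝ)+2)^2 * r^n / (1-r^(2*n+2)))) :=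
    summable_Qc hr0 hr1 (fun n => by positivity) bound2''
  have hsc : Summable (fun n : ℕ => (((n:ℝ)+1)^3 * r^n / (1-r^(2*n+2)))) :=
    summable_Qc hr0 hr1 (fun n => by positivity) bound3
  have hsd : Summable (fun n : ℕ => (((n:ℝ)+1) * r^n / (1-r^(2*n+2)))) :=
    summable_Qc hr0 hr1 (fun n => by positivity) bound1
  rw [Qc, Qc, Qc, Qc, ← hsa.tsum_add hsb, ← tsum_mul_left, ← tsum_mul_left,
    ← (hsc.mul_left 2).tsum_add (hsd.mul_left 2)]
  refine tsum_congr fun n => ?_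
  have hD : (1:ℝ) - r^(2*n+2) ≠ 0 := (den_pos hr0.le hr1 n).ne'
  field_simp
  ring

lemma metric_eq (hr0 : 0 < r) (hr1 : r < 1) :
    bergmanMetricSq r (Real.sqrt r) / Real.log (1/r)
      = 2 * Qc (fun n => ((n:ℝ)+1)^3) r /
        (2 * Qc (fun n => (n:ℝ)+1) r * (r * Real.log (1/r)) + 1/2) := by
  have hL : 0 < Real.log (1/r) := by
    rw [one_div, Real.log_inv]; linarith [Real.log_neg hr0 hr1]
  have hA0 : 0 ≤ Qc (fun n => (n:ℝ)+1) r := Qc_nonneg hr0 hr1 (fun n => by positivity)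
  have hs0 : (0:ℝ) < Real.sqrt r := Real.sqrt_pos.mpr hr0
  have hb1 : beta1 r (Real.sqrt r) = -(Real.sqrt r)⁻¹ * beta0 r (Real.sqrt r) := by
    rw [beta1_tsum hr0 hr1, beta0_eq hr0 hr1]
    linear_combination (1/π) * (Real.sqrt r)⁻¹ * (Qc_diff hr0 hr1)
  have hb2 : beta2 r (Real.sqrt r) =
      (1/π) * ((2 * Qc (fun n => ((n:ℝ)+1)^3) r + 2 * Qc (fun n => (n:ℝ)+1) r) * r⁻¹
        + (r^2)⁻¹/(2*Real.log (1/r))) := by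
    rw [beta2_tsum hr0 hr1]
    linear_combination (1/π) * r⁻¹ * (Qc_comb hr0 hr1)
  rw [bergmanMetricSq, hb1, hb2, beta0_eq hr0 hr1]
  set A := Qc (fun n => (n:ℝ)+1) r with hAdef
  set B := Qc (fun n => ((n:ℝ)+1)^3) r with hBdef
  set L := Real.log (1/r) with hLdef
  set s := Real.sqrt r with hsdef
  have hs2 : s^2 = r := Real.sq_sqrt hr0.le
  rw [← hs2]
  have hsne : s ≠ 0 := hs0.ne'
  have hpi : (π:ℝ) ≠ 0 := Real.pi_ne_zero
  have hLne : L ≠ 0 := hL.ne'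
  have hden1 : 2*A + (s^2)⁻¹/(2*L) ≠ 0 := by
    have h1 : 0 < (s^2)⁻¹/(2*L) := by positivity
    linarith
  have hden2 : 2*A*(s^2*L) + 1/2 ≠ 0 := by
    have h1 : 0 ≤ 2*A*(s^2*L) := by positivity
    linarith
  field_simp
  ring

end assemble

/-- For the annulus `Ω_r = {r < |z| < 1}`, the Bergman metric at `√r` satisfies
`lim_{r→0⁺} F_B^{Ω_r}(√r,1)²/log(1/r) = 4`. -/
theorem bergman_metric_annulus_at_sqrt :
    Tendsto (fun r : ℝ => bergmanMetricSq r (Real.sqrt r) / Real.log (1/r))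
      (𝓝[>] (0:ℝ)) (𝓝 4) := by
  have hu : Tendsto (fun r : ℝ => r * Real.log (1/r)) (𝓝[>] (0:ℝ)) (𝓝 0) := by
    have h := (tendsto_log_mul_rpow_nhdsGT_zero (r := 1) one_pos).neg
    rw [neg_zero] at h
    refine h.congr' ?_
    filter_upwards [self_mem_nhdsWithin] with x hx
    rw [one_div, Real.log_inv, Real.rpow_one]; ring
  have hA := Qc_tendsto (c := fun n => (n:ℝ)+1) (fun n => by positivity) bound1 (by norm_num)
  have hB := Qc_tendsto (c := fun n => ((n:ℝ)+1)^3) (fun n => by positivity) bound3 (by norm_num)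
  have hlim : Tendsto (fun r : ℝ => 2 * Qc (fun n => ((n:ℝ)+1)^3) r /
      (2 * Qc (fun n => (n:ℝ)+1) r * (r * Real.log (1/r)) + 1/2)) (𝓝[>] (0:ℝ)) (𝓝 4) := by
    have hnum := hB.const_mul (2:ℝ)
    have hden := ((hA.const_mul (2:ℝ)).mul hu).add (tendsto_const_nhds (x := (1/2:ℝ)))
    have hd := hnum.div hden (by norm_num)
    have h4 : ((2:ℝ)*1)/(2*1*0 + 1/2) = 4 := by norm_num
    rw [h4] at hd
    exact hd
  have heq : (fun r : ℝ => 2 * Qc (fun n => ((n:ℝ)+1)^3) r /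
      (2 * Qc (fun n => (n:ℝ)+1) r * (r * Real.log (1/r)) + 1/2))
      =ᶠ[𝓝[>] (0:ℝ)]
      (fun r : ℝ => bergmanMetricSq r (Real.sqrt r) / Real.log (1/r)) := by
    filter_upwards [Ioo_mem_nhdsGT_of_mem ⟨le_refl (0:ℝ), one_pos⟩] with r hr
    exact (metric_eq hr.1 hr.2).symm
  exact Tendsto.congr' heq hlim
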